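/- For any compositions β, γ and α: (1) β*∘γ ∼ β∘γ; (2) β∘γ* ∼ β∘γ; and (3) β∘α*∘γ ∼ β∘α∘γ. -/
import Mathlib


/-- The size `|β|` of a composition, i.e. the sum of its components. -/
def size (l : List ℕ+) : ℕ := (l.map fun x => (x : ℕ)).sum

/-- Near concatenation `α ⊙ β` of two (nonempty) compositions. -/
def odot (a b : List ℕ+) : List ℕ+ :=
  if a = [] then b
  else if b = [] then a
  else a.dropLast ++ (a.getLastI + b.headI) :: b.tail

/-- `β^{⊙ m}`, the `m`-fold near concatenation of `β` with itself. -/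
def odotPow (b : List ℕ+) : ℕ → List ℕ+
  | 0 => []
  | n + 1 => odot (odotPow b n) b

/-- The composition operation `α ∘ β = β^{⊙α₁} · β^{⊙α₂} ⋯ β^{⊙αₖ}`. -/
def compOp (a b : List ℕ+) : List ℕ+ := (a.map fun ai => odotPow b (ai : ℕ)).flatten

/-- `β₁ ∘ β₂ ∘ ⋯ ∘ βₖ` (the composition `1` is a two-sided identity for `∘`). -/
def compFold (l : List (List ℕ+)) : List ℕ+ := l.foldr compOp [1]

/-- The list of all coarsenings of a composition. -/
def coarsenings : List ℕ+ → List (List ℕ+)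
  | [] => [[]]
  | [a] => [[a]]
  | a :: b :: t => ((coarsenings (b :: t)).map (a :: ·)) ++ coarsenings ((a + b) :: t)
  termination_by l => l.length

/-- The multiset `M(β)` of partitions (as multisets of parts) of all coarsenings of `β`. -/
def Mset (b : List ℕ+) : Multiset (Multiset ℕ+) :=
  ↑((coarsenings b).map fun l => (l : Multiset ℕ+))

-- auxiliary definition for the pointwise sum pairing
def Pmul (A B : Multiset (Multiset ℕ+)) : Multiset (Multiset ℕ+) :=
  A.bind fun a => B.map fun b => a + b

@[simp] lemma odot_nil_left (b : List ℕ+) : odot [] b = b := by simp [odot]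
@[simp] lemma odot_nil_right (a : List ℕ+) : odot a [] = a := by
  unfold odot; split <;> simp_all

lemma odot_concat_cons (i : List ℕ+) (x y : ℕ+) (t : List ℕ+) :
    odot (i ++ [x]) (y :: t) = i ++ (x + y) :: t := by
  unfold odot
  rw [if_neg (by simp), if_neg (by simp)]
  simp [List.getLastI_eq_getLast?, List.dropLast_concat]

lemma odot_ne_nil {v : List ℕ+} (u : List ℕ+) (hv : v ≠ []) : odot u v ≠ [] := by
  rcases List.eq_nil_or_concat u with rfl | ⟨i, x, rfl⟩
  · simpa using hv
  · rcases v with _ | ⟨y, t⟩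
    · simp at hv
    · rw [List.concat_eq_append, odot_concat_cons]; simp

lemma odot_append_right (u : List ℕ+) {v : List ℕ+} (hv : v ≠ []) (w : List ℕ+) :
    odot u (v ++ w) = odot u v ++ w := by
  rcases List.eq_nil_or_concat u with rfl | ⟨i, x, rfl⟩
  · simp
  · rcases v with _ | ⟨y, t⟩
    · simp at hv
    · rw [List.concat_eq_append, List.cons_append, odot_concat_cons, odot_concat_cons]
      simp

lemma odot_append_left (u : List ℕ+) {v : List ℕ+} (hv : v ≠ []) (w : List ℕ+) :
    odot (u ++ v) w = u ++ odot v w := by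
  rcases w with _ | ⟨y, t⟩
  · simp
  · rcases List.eq_nil_or_concat v with rfl | ⟨i, x, rfl⟩
    · simp at hv
    · rw [List.concat_eq_append, ← List.append_assoc, odot_concat_cons, odot_concat_cons]
      simp

lemma odot_assoc (u v w : List ℕ+) : odot (odot u v) w = odot u (odot v w) := by
  rcases List.eq_nil_or_concat u with rfl | ⟨i, x, rfl⟩
  · simp
  rcases v with _ | ⟨y, t⟩
  · simp
  rcases w with _ | ⟨z, s⟩
  · simp
  rw [List.concat_eq_append, odot_concat_cons]
  rcases List.eq_nil_or_concat t with rfl | ⟨j, p, rfl⟩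
  · have h1 : odot [y] (z :: s) = (y + z) :: s := by
      have := odot_concat_cons [] y z s; simpa using this
    rw [h1, odot_concat_cons, odot_concat_cons, add_assoc]
  · rw [List.concat_eq_append]
    have h3 : odot (y :: (j ++ [p])) (z :: s) = y :: (j ++ (p + z) :: s) := by
      have := odot_concat_cons (y :: j) p z s; simpa using this
    rw [h3, odot_concat_cons]
    have h4 : odot (i ++ (x + y) :: (j ++ [p])) (z :: s) = (i ++ (x + y) :: j) ++ (p + z) :: s := by
      have := odot_concat_cons (i ++ (x + y) :: j) p z s; simpa using this
    rw [h4]; simp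

lemma odotPow_add (b : List ℕ+) (m n : ℕ) :
    odotPow b (m + n) = odot (odotPow b m) (odotPow b n) := by
  induction n with
  | zero => simp [odotPow]
  | succ n ih => rw [← add_assoc]; show odot _ b = _
                 rw [ih, odot_assoc]; rfl

lemma odotPow_ne_nil {b : List ℕ+} (hb : b ≠ []) {n : ℕ} (hn : n ≠ 0) : odotPow b n ≠ [] := by
  cases n with
  | zero => exact absurd rfl hn
  | succ n => exact odot_ne_nil _ hb

lemma odot_pow_comm (c : List ℕ+) (n : ℕ) : odot c (odotPow c n) = odot (odotPow c n) c := by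
  induction n with
  | zero => simp [odotPow]
  | succ m ih =>
    show odot c (odot (odotPow c m) c) = odot (odot (odotPow c m) c) c
    rw [← odot_assoc, ih]

lemma odot_reverse (a b : List ℕ+) : (odot a b).reverse = odot b.reverse a.reverse := by
  rcases List.eq_nil_or_concat a with rfl | ⟨i, x, rfl⟩
  · simp
  rcases b with _ | ⟨y, t⟩
  · simp
  rw [List.concat_eq_append, odot_concat_cons]
  have : odot (t.reverse ++ [y]) (x :: i.reverse) = t.reverse ++ (y + x) :: i.reverse :=
    odot_concat_cons _ _ _ _
  simp [this, add_comm]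

lemma odotPow_reverse (b : List ℕ+) (n : ℕ) : (odotPow b n).reverse = odotPow b.reverse n := by
  induction n with
  | zero => rfl
  | succ n ih =>
    show (odot (odotPow b n) b).reverse = odot (odotPow b.reverse n) b.reverse
    rw [odot_reverse, ih, odot_pow_comm]

@[simp] lemma compOp_nil (b : List ℕ+) : compOp [] b = [] := rfl

lemma compOp_cons (a : ℕ+) (t b : List ℕ+) :
    compOp (a :: t) b = odotPow b (a : ℕ) ++ compOp t b := rfl

lemma compOp_append (u v b : List ℕ+) : compOp (u ++ v) b = compOp u b ++ compOp v b := by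
  simp [compOp]

lemma compOp_singleton (a : ℕ+) (b : List ℕ+) : compOp [a] b = odotPow b (a : ℕ) := by
  simp [compOp]

lemma compOp_ne_nil {u b : List ℕ+} (hu : u ≠ []) (hb : b ≠ []) : compOp u b ≠ [] := by
  rcases u with _ | ⟨a, t⟩
  · simp at hu
  · rw [compOp_cons]
    have := odotPow_ne_nil hb (n := (a : ℕ)) (by simp [a.pos.ne'])
    intro h
    rw [List.append_eq_nil_iff] at h
    exact this h.1

lemma compOp_reverse (u v : List ℕ+) : (compOp u v).reverse = compOp u.reverse v.reverse := by
  induction u with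
  | nil => rfl
  | cons a t ih =>
    rw [compOp_cons, List.reverse_append, ih, List.reverse_cons, compOp_append,
      compOp_singleton, odotPow_reverse]

lemma compOp_odot (u v : List ℕ+) {c : List ℕ+} (hc : c ≠ []) :
    compOp (odot u v) c = odot (compOp u c) (compOp v c) := by
  rcases List.eq_nil_or_concat u with rfl | ⟨i, x, rfl⟩
  · simp
  rcases v with _ | ⟨y, t⟩
  · simp
  rw [List.concat_eq_append, odot_concat_cons]
  have hx : odotPow c (x : ℕ) ≠ [] := odotPow_ne_nil hc (by simp [x.pos.ne'])
  have hy : odotPow c (y : ℕ) ≠ [] := odotPow_ne_nil hc (by simp [y.pos.ne'])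
  rw [compOp_append, compOp_append, compOp_singleton, compOp_cons, compOp_cons,
    odot_append_left _ hx, odot_append_right _ hy]
  have : ((x + y : ℕ+) : ℕ) = (x : ℕ) + (y : ℕ) := rfl
  rw [this, odotPow_add]

lemma compOp_odotPow (b : List ℕ+) {c : List ℕ+} (hc : c ≠ []) (n : ℕ) :
    compOp (odotPow b n) c = odotPow (compOp b c) n := by
  induction n with
  | zero => rfl
  | succ n ih =>
    show compOp (odot (odotPow b n) b) c = odot (odotPow (compOp b c) n) (compOp b c)
    rw [compOp_odot _ _ hc, ih]

lemma compOp_assoc (a b : List ℕ+) {c : List ℕ+} (hc : c ≠ []) :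
    compOp (compOp a b) c = compOp a (compOp b c) := by
  induction a with
  | nil => rfl
  | cons x t ih =>
    rw [compOp_cons, compOp_append, compOp_cons, ih, compOp_odotPow _ hc]

lemma flatMap_pure_map {α β : Type*} (f : α → β) (l : List α) :
    (l.flatMap fun a => [f a]) = l.map f := by
  induction l with
  | nil => rfl
  | cons x t ih => simp [ih]

lemma Mset_eq (b : List ℕ+) :
    Mset b = ↑((coarsenings b).map fun l => Multiset.ofList l) := by
  show Multiset.ofList (List.map (fun l => l)
    ((coarsenings b).flatMap fun a => [Multiset.ofList a])) = _
  rw [flatMap_pure_map, List.map_id']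

lemma coarsenings_cons_cons (a b : ℕ+) (t : List ℕ+) :
    coarsenings (a :: b :: t) = ((coarsenings (b :: t)).map (a :: ·)) ++ coarsenings ((a + b) :: t) := by
  rw [coarsenings]

/-- pointwise sum of two multisets of partitions -/
lemma Pmul_comm (A B : Multiset (Multiset ℕ+)) : Pmul A B = Pmul B A := by
  unfold Pmul
  rw [show (fun a => B.map fun b => a + b) = fun a => B.bind fun b => {a + b} by
    funext a; rw [Multiset.bind_singleton],
    show (fun b => A.map fun a => b + a) = fun b => A.bind fun a => {b + a} by
    funext b; rw [Multiset.bind_singleton], Multiset.bind_bind]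
  simp [add_comm]

lemma Pmul_add (A B C : Multiset (Multiset ℕ+)) : Pmul (A + B) C = Pmul A C + Pmul B C :=
  Multiset.add_bind _ _ _

lemma Pmul_map_cons (a : ℕ+) (A B : Multiset (Multiset ℕ+)) :
    Pmul (A.map (a ::ₘ ·)) B = (Pmul A B).map (a ::ₘ ·) := by
  unfold Pmul
  rw [Multiset.bind_map, Multiset.map_bind]
  congr 1; funext c
  rw [Multiset.map_map]
  congr 1; funext d
  simp [Multiset.cons_add]

lemma Mset_singleton (a : ℕ+) : Mset [a] = {({a} : Multiset ℕ+)} := by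
  rw [Mset_eq, coarsenings]
  rfl

lemma Pmul_singleton_left (a : ℕ+) (B : Multiset (Multiset ℕ+)) :
    Pmul {({a} : Multiset ℕ+)} B = B.map (a ::ₘ ·) := by
  simp [Pmul]

lemma Mset_cons (a : ℕ+) {w : List ℕ+} (hw : w ≠ []) :
    Mset (a :: w) = (Mset w).map (a ::ₘ ·) + Mset (odot [a] w) := by
  rcases w with _ | ⟨b, t⟩
  · simp at hw
  · have ho : odot [a] (b :: t) = (a + b) :: t := by
      have := odot_concat_cons [] a b t; simpa using this
    rw [ho, Mset_eq, Mset_eq, Mset_eq, coarsenings_cons_cons, List.map_append,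
      ← Multiset.coe_add, Multiset.map_coe, List.map_map, List.map_map]
    congr 2

lemma Mset_append_aux (n : ℕ) : ∀ u v : List ℕ+, u.length ≤ n → u ≠ [] → v ≠ [] →
    Mset (u ++ v) = Pmul (Mset u) (Mset v) + Mset (odot u v) := by
  induction n with
  | zero => intro u v hl hu _; cases u <;> simp_all
  | succ n ih =>
    intro u v hl hu hv
    rcases u with _ | ⟨a, u'⟩
    · simp at hu
    rcases eq_or_ne u' [] with rfl | hu'
    · rw [List.singleton_append, Mset_cons a hv, Mset_singleton, Pmul_singleton_left]
    · have hlen : u'.length ≤ n := by simpa using hl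
      have huv : u' ++ v ≠ [] := by simp [hv]
      have hmerge : odot [a] u' ≠ [] := odot_ne_nil [a] hu'
      have hmlen : (odot [a] u').length ≤ n := by
        rcases u' with _ | ⟨b, r⟩
        · simp at hu'
        · have : odot [a] (b :: r) = (a + b) :: r := by
            have := odot_concat_cons [] a b r; simpa using this
          rw [this]; simpa using hlen
      have e1 : Mset (a :: (u' ++ v)) =
          (Mset (u' ++ v)).map (a ::ₘ ·) + Mset (odot [a] u' ++ v) := by
        rw [Mset_cons a huv, odot_append_right [a] hu' v]
      have e2 := ih u' v hlen hu' hv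
      have e3 := ih (odot [a] u') v hmlen hmerge hv
      have e4 : Mset (a :: u') = (Mset u').map (a ::ₘ ·) + Mset (odot [a] u') :=
        Mset_cons a hu'
      have e5 : Mset (odot (a :: u') v) =
          (Mset (odot u' v)).map (a ::ₘ ·) + Mset (odot [a] (odot u' v)) := by
        rw [show odot (a :: u') v = a :: odot u' v by simpa using odot_append_left [a] hu' v]
        exact Mset_cons a (odot_ne_nil u' hv)
      rw [List.cons_append, e1, e2, e3, e5, e4, Pmul_add, Pmul_map_cons, Multiset.map_add,
        odot_assoc]
      abel

lemma Mset_append {u v : List ℕ+} (hu : u ≠ []) (hv : v ≠ []) :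
    Mset (u ++ v) = Pmul (Mset u) (Mset v) + Mset (odot u v) :=
  Mset_append_aux u.length u v le_rfl hu hv

lemma Mset_reverse_aux (n : ℕ) : ∀ l : List ℕ+, l.length ≤ n → Mset l.reverse = Mset l := by
  induction n with
  | zero => intro l hl; cases l <;> simp_all
  | succ n ih =>
    intro l hl
    rcases l with _ | ⟨a, l'⟩
    · rfl
    rcases l' with _ | ⟨b, s⟩
    · rfl
    have h1 : (a :: b :: s).reverse = (b :: s).reverse ++ [a] := by simp
    have hbs : (b :: s).reverse ≠ [] := by simp
    have h2 : odot (b :: s).reverse [a] = ((b + a) :: s).reverse := by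
      rw [show (b :: s).reverse = s.reverse ++ [b] by simp,
        odot_append_left s.reverse (by simp) [a],
        show odot [b] [a] = [b + a] by simpa using odot_concat_cons [] b a []]
      simp
    have h3 : odot [a] (b :: s) = (a + b) :: s := by
      simpa using odot_concat_cons [] a b s
    rw [h1, Mset_append hbs (by simp), h2,
      ih (b :: s) (by simpa using hl),
      ih ((b + a) :: s) (by simpa using hl),
      show (a :: b :: s) = [a] ++ (b :: s) from rfl,
      Mset_append (by simp) (by simp), h3, Pmul_comm, add_comm b a]

lemma Mset_reverse (l : List ℕ+) : Mset l.reverse = Mset l :=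
  Mset_reverse_aux l.length l le_rfl

lemma core_aux (γ : List ℕ+) (hγ : γ ≠ []) (n : ℕ) :
    ∀ l : List ℕ+, l.length ≤ n → Mset (compOp l.reverse γ) = Mset (compOp l γ) := by
  induction n with
  | zero => intro l hl; cases l <;> simp_all
  | succ n ih =>
    intro l hl
    rcases l with _ | ⟨a, l'⟩
    · rfl
    rcases l' with _ | ⟨b, s⟩
    · rfl
    have hPa : odotPow γ (a : ℕ) ≠ [] := odotPow_ne_nil hγ (by simp [a.pos.ne'])
    have hPb : odotPow γ (b : ℕ) ≠ [] := odotPow_ne_nil hγ (by simp [b.pos.ne'])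
    have h1 : compOp (a :: b :: s).reverse γ = compOp (b :: s).reverse γ ++ odotPow γ (a : ℕ) := by
      rw [show (a :: b :: s).reverse = (b :: s).reverse ++ [a] by simp, compOp_append,
        compOp_singleton]
    have hbs : compOp (b :: s).reverse γ ≠ [] := compOp_ne_nil (by simp) hγ
    have h2 : odot (compOp (b :: s).reverse γ) (odotPow γ (a : ℕ)) =
        compOp ((b + a) :: s).reverse γ := by
      rw [show (b :: s).reverse = s.reverse ++ [b] by simp, compOp_append, compOp_singleton,
        odot_append_left _ hPb, ← odotPow_add,
        show (b : ℕ) + (a : ℕ) = ((b + a : ℕ+) : ℕ) from rfl,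
        show ((b + a) :: s).reverse = s.reverse ++ [b + a] by simp, compOp_append,
        compOp_singleton]
    have h3 : odot (odotPow γ (a : ℕ)) (compOp (b :: s) γ) = compOp ((a + b) :: s) γ := by
      rw [compOp_cons, odot_append_right _ hPb, ← odotPow_add,
        show (a : ℕ) + (b : ℕ) = ((a + b : ℕ+) : ℕ) from rfl, compOp_cons]
    rw [h1, Mset_append hbs hPa, h2,
      ih (b :: s) (by simpa using hl),
      ih ((b + a) :: s) (by simpa using hl),
      show compOp (a :: b :: s) γ = odotPow γ (a : ℕ) ++ compOp (b :: s) γ from rfl,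
      Mset_append hPa (compOp_ne_nil (by simp) hγ), h3, Pmul_comm, add_comm b a]

lemma core (γ : List ℕ+) (hγ : γ ≠ []) (l : List ℕ+) :
    Mset (compOp l.reverse γ) = Mset (compOp l γ) :=
  core_aux γ hγ l.length l le_rfl

/-- For any compositions `β`, `γ`, `α`:
(1) `β*∘γ ∼ β∘γ`; (2) `β∘γ* ∼ β∘γ`; (3) `β∘α*∘γ ∼ β∘α∘γ`. -/
theorem reverse_factor_equiv (β γ α : List ℕ+) (hβ : β ≠ []) (hγ : γ ≠ []) (hα : α ≠ []) :
    Mset (compOp β.reverse γ) = Mset (compOp β γ) ∧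
    Mset (compOp β γ.reverse) = Mset (compOp β γ) ∧
    Mset (compOp β (compOp α.reverse γ)) = Mset (compOp β (compOp α γ)) := by
  have hγr : γ.reverse ≠ [] := by simpa using hγ
  have rev_right : ∀ u v : List ℕ+, v ≠ [] → Mset (compOp u v.reverse) = Mset (compOp u v) := by
    intro u v hv
    calc Mset (compOp u v.reverse)
        = Mset ((compOp u v.reverse).reverse) := (Mset_reverse _).symm
      _ = Mset (compOp u.reverse v) := by rw [compOp_reverse, List.reverse_reverse]
      _ = Mset (compOp u v) := core v hv u
  refine ⟨core γ hγ β, rev_right β γ hγ, ?_⟩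
  calc Mset (compOp β (compOp α.reverse γ))
      = Mset (compOp β ((compOp α γ.reverse).reverse)) := by
        rw [compOp_reverse, List.reverse_reverse]
    _ = Mset (compOp β (compOp α γ.reverse)) :=
        rev_right β _ (by simpa using compOp_ne_nil hα hγr)
    _ = Mset (compOp (compOp β α) γ.reverse) := by rw [compOp_assoc β α hγr]
    _ = Mset (compOp (compOp β α) γ) := rev_right (compOp β α) γ hγ
    _ = Mset (compOp β (compOp α γ)) := by rw [compOp_assoc β α hγ]
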